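/- Define S₁ = (R(A) + b) ∩ K, S₂ = R(A, b) ∩ K, and S₃ = {(Ax + tb, t) : x ∈ X, t ∈ ℝ} ∩ (K × ℝ₊). Let z be a maximum slack of P (so z ∈ ri S₁) and let F be the smallest face of K containing z. If s₂ ∈ ri S₂ and (s₃, s₀) ∈ ri S₃ with s₃ ∈ K and s₀ ≥ 0, then: (1) s₂ ∈ ri F; (2) s₃ ∈ ri F and s₀ > 0; (3) dir(z, K) = dir(s₂, K) = dir(s₃, K). -/

import Mathlib

open scoped RealInnerProductSpace

noncomputable section

/-- The set of feasible directions at `x` in the convex set `C`. -/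
def dirSet {Y : Type*} [NormedAddCommGroup Y] [InnerProductSpace ℝ Y]
    (x : Y) (C : Set Y) : Set Y :=
  {v | ∃ ε : ℝ, 0 < ε ∧ x + ε • v ∈ C}

/-- `E` is a face of the cone `C`. -/
def IsFaceOf {Y : Type*} [NormedAddCommGroup Y] [InnerProductSpace ℝ Y]
    (C E : Set Y) : Prop :=
  E ⊆ C ∧ Convex ℝ E ∧
    ∀ x₁ ∈ C, ∀ x₂ ∈ C, (1 / 2 : ℝ) • (x₁ + x₂) ∈ E → x₁ ∈ E ∧ x₂ ∈ E

/-- `E` is the smallest face of `C` containing `x`. -/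
def IsSmallestFace {Y : Type*} [NormedAddCommGroup Y] [InnerProductSpace ℝ Y]
    (C E : Set Y) (x : Y) : Prop :=
  IsFaceOf C E ∧ x ∈ E ∧ ∀ E', IsFaceOf C E' → x ∈ E' → E ⊆ E'

section Aux

open Set

variable {Y : Type*}

/-- Prolongation: from a point of the intrinsic interior one can move slightly past it away
from any point of the set, staying in the set. -/
theorem ri_prolong [NormedAddCommGroup Y] [NormedSpace ℝ Y] {S : Set Y} {x y : Y}
    (hx : x ∈ intrinsicInterior ℝ S) (hy : y ∈ S) :
    ∃ ε : ℝ, 0 < ε ∧ x + ε • (x - y) ∈ S := by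
  obtain ⟨p, hp, rfl⟩ := hx
  have hymem : y ∈ affineSpan ℝ S := subset_affineSpan ℝ S hy
  have hmem : ∀ t : ℝ, (p : Y) + t • ((p : Y) - y) ∈ affineSpan ℝ S := by
    intro t
    have := AffineSubspace.smul_vsub_vadd_mem (affineSpan ℝ S) t p.2 hymem p.2
    simpa [vsub_eq_sub, vadd_eq_add, add_comm] using this
  set f : ℝ → affineSpan ℝ S := fun t => ⟨(p : Y) + t • ((p : Y) - y), hmem t⟩ with hf
  have hcont : Continuous f := by
    apply Continuous.subtype_mk
    fun_prop
  have hf0 : f 0 = p := by ext; simp [hf]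
  have : f ⁻¹' (interior ((↑) ⁻¹' S : Set (affineSpan ℝ S))) ∈ nhds (0:ℝ) := by
    apply (isOpen_interior.preimage hcont).mem_nhds
    simp [hf0, hp]
  obtain ⟨δ, hδ, hball⟩ := Metric.mem_nhds_iff.mp this
  refine ⟨δ/2, by linarith, ?_⟩
  have h2 : f (δ/2) ∈ interior ((↑) ⁻¹' S : Set (affineSpan ℝ S)) := by
    apply hball
    rw [Metric.mem_ball, dist_zero_right, Real.norm_eq_abs,
      abs_of_nonneg (by linarith : (0:ℝ) ≤ δ/2)]
    linarith
  exact (interior_subset h2 : f (δ/2) ∈ ((↑) ⁻¹' S : Set (affineSpan ℝ S)))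

/-- Line segment principle for the intrinsic interior. -/
theorem combo_mem_ri [NormedAddCommGroup Y] [NormedSpace ℝ Y] {S : Set Y} (hS : Convex ℝ S)
    {x y : Y} (hx : x ∈ intrinsicInterior ℝ S) (hy : y ∈ S) {a : ℝ} (ha : 0 < a) (ha1 : a ≤ 1) :
    a • x + (1 - a) • y ∈ intrinsicInterior ℝ S := by
  obtain ⟨p, hp, rfl⟩ := hx
  have hymem : y ∈ affineSpan ℝ S := subset_affineSpan ℝ S hy
  have hmem : ∀ q : affineSpan ℝ S, a • (q : Y) + (1 - a) • y ∈ affineSpan ℝ S := by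
    intro q
    have := AffineSubspace.smul_vsub_vadd_mem (affineSpan ℝ S) a q.2 hymem hymem
    have heq : a • ((q : Y) -ᵥ y) +ᵥ y = a • (q : Y) + (1 - a) • y := by
      simp [vsub_eq_sub, vadd_eq_add, smul_sub, sub_smul]
      abel
    rwa [heq] at this
  have hmem' : ∀ q : affineSpan ℝ S, a⁻¹ • (q : Y) + (1 - a⁻¹) • y ∈ affineSpan ℝ S := by
    intro q
    have := AffineSubspace.smul_vsub_vadd_mem (affineSpan ℝ S) a⁻¹ q.2 hymem hymem
    have heq : a⁻¹ • ((q : Y) -ᵥ y) +ᵥ y = a⁻¹ • (q : Y) + (1 - a⁻¹) • y := by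
      simp [vsub_eq_sub, vadd_eq_add, smul_sub, sub_smul]
      abel
    rwa [heq] at this
  have hane : a ≠ 0 := ne_of_gt ha
  set φ : affineSpan ℝ S ≃ₜ affineSpan ℝ S :=
    { toFun := fun q => ⟨a • (q : Y) + (1 - a) • y, hmem q⟩
      invFun := fun q => ⟨a⁻¹ • (q : Y) + (1 - a⁻¹) • y, hmem' q⟩
      left_inv := by
        intro q; ext
        show a⁻¹ • (a • (q : Y) + (1 - a) • y) + (1 - a⁻¹) • y = q
        match_scalars <;> field_simp <;> ring
      right_inv := by
        intro q; ext
        show a • (a⁻¹ • (q : Y) + (1 - a⁻¹) • y) + (1 - a) • y = q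
        match_scalars <;> field_simp <;> ring
      continuous_toFun := by
        apply Continuous.subtype_mk; fun_prop
      continuous_invFun := by
        apply Continuous.subtype_mk; fun_prop } with hφ
  have himg : φ '' ((↑) ⁻¹' S : Set (affineSpan ℝ S)) ⊆ ((↑) ⁻¹' S : Set (affineSpan ℝ S)) := by
    rintro _ ⟨q, hq, rfl⟩
    exact hS hq hy (le_of_lt ha) (by linarith) (by ring)
  have h1 : φ p ∈ interior (φ '' ((↑) ⁻¹' S : Set (affineSpan ℝ S))) := by
    rw [← φ.image_interior]
    exact Set.mem_image_of_mem φ hp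
  exact ⟨φ p, interior_mono himg h1, rfl⟩

variable [NormedAddCommGroup Y] [InnerProductSpace ℝ Y] {K E : Set Y}

/-- The key dyadic argument: a face (in the midpoint sense) absorbs endpoints of segments whose
interior meets it. -/
theorem face_right_of_combo (hK : Convex ℝ K) (hE : IsFaceOf K E) {u w : Y}
    (hu : u ∈ K) (hw : w ∈ K) {c : ℝ} (hc0 : 0 < c) (hc1 : c ≤ 1)
    (h : u + c • (w - u) ∈ E) : w ∈ E := by
  have hpK : ∀ a : ℝ, 0 ≤ a → a ≤ 1 → u + a • (w - u) ∈ K := by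
    intro a ha0 ha1
    have := hK hu hw (by linarith : (0:ℝ) ≤ 1 - a) ha0 (by ring)
    have heq : (1 - a) • u + a • w = u + a • (w - u) := by module
    rwa [heq] at this
  have hstep : ∀ a₁ a₂ : ℝ, 0 ≤ a₁ → a₁ ≤ 1 → 0 ≤ a₂ → a₂ ≤ 1 →
      u + ((a₁ + a₂)/2) • (w - u) ∈ E →
      (u + a₁ • (w - u) ∈ E ∧ u + a₂ • (w - u) ∈ E) := by
    intro a₁ a₂ h10 h11 h20 h21 hmid
    apply hE.2.2 _ (hpK a₁ h10 h11) _ (hpK a₂ h20 h21)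
    have heq : (1/2 : ℝ) • ((u + a₁ • (w - u)) + (u + a₂ • (w - u)))
        = u + ((a₁ + a₂)/2) • (w - u) := by module
    rwa [heq]
  have haux : ∀ n : ℕ, ∀ a : ℝ, 0 < a → a ≤ 1 → 1/2 < 2^n * a →
      u + a • (w - u) ∈ E → w ∈ E := by
    intro n
    induction n with
    | zero =>
      intro a ha0 ha1 hgt hmem
      simp only [pow_zero, one_mul] at hgt
      have := hstep (2*a - 1) 1 (by linarith) (by linarith) (by norm_num) le_rfl
        (by rw [show ((2*a - 1) + 1)/2 = a by ring]; exact hmem)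
      simpa using this.2
    | succ n ih =>
      intro a ha0 ha1 hgt hmem
      rcases le_or_gt a (1/2) with hle | hgt2
      · have hdouble := hstep 0 (2*a) le_rfl zero_le_one (by linarith) (by linarith)
          (by rw [show ((0:ℝ) + 2*a)/2 = a by ring]; exact hmem)
        exact ih (2*a) (by linarith) (by linarith)
          (by rw [show (2:ℝ)^n * (2*a) = 2^(n+1) * a by ring]; exact hgt) hdouble.2
      · have := hstep (2*a - 1) 1 (by linarith) (by linarith) (by norm_num) le_rfl
          (by rw [show ((2*a - 1) + 1)/2 = a by ring]; exact hmem)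
        simpa using this.2
  obtain ⟨n, hn⟩ := pow_unbounded_of_one_lt (1/(2*c)) (one_lt_two (α := ℝ))
  exact haux n c hc0 hc1 (by rw [div_lt_iff₀ (by positivity)] at hn; nlinarith) h

theorem face_mem_of_combo (hK : Convex ℝ K) (hE : IsFaceOf K E) {u w : Y}
    (hu : u ∈ K) (hw : w ∈ K) {c : ℝ} (hc0 : 0 < c) (hc1 : c < 1)
    (h : u + c • (w - u) ∈ E) : u ∈ E ∧ w ∈ E := by
  refine ⟨?_, face_right_of_combo hK hE hu hw hc0 (le_of_lt hc1) h⟩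
  apply face_right_of_combo hK hE hw hu (by linarith : (0:ℝ) < 1 - c) (by linarith)
  have heq : w + (1 - c) • (u - w) = u + c • (w - u) := by module
  rwa [heq]

theorem face_smul (hK : Convex ℝ K)
    (hKcone : ∀ (t : ℝ), 0 ≤ t → ∀ x ∈ K, t • x ∈ K)
    (hE : IsFaceOf K E) {y : Y} (hy : y ∈ E) {l : ℝ} (hl : 0 ≤ l) : l • y ∈ E := by
  have hyK : y ∈ K := hE.1 hy
  rcases eq_or_lt_of_le hl with rfl | hl
  · have h0 : (0:Y) ∈ K := by simpa using hKcone 0 le_rfl y hyK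
    have h2y : (2:ℝ) • y ∈ K := hKcone 2 (by norm_num) y hyK
    have := face_mem_of_combo hK hE h0 h2y (c := 1/2) (by norm_num) (by norm_num)
      (by rw [show (0:Y) + (1/2 : ℝ) • ((2:ℝ) • y - 0) = y by module]; exact hy)
    simpa using this.1
  · have hu : l • y ∈ K := hKcone l (le_of_lt hl) y hyK
    have hw : l⁻¹ • y ∈ K := hKcone l⁻¹ (by positivity) y hyK
    have hc0 : (0:ℝ) < l/(1+l) := by positivity
    have hc1 : l/(1+l) < 1 := by rw [div_lt_one (by linarith)]; linarith
    have heq : l • y + (l/(1+l)) • (l⁻¹ • y - l • y) = y := by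
      match_scalars <;> field_simp <;> ring
    exact (face_mem_of_combo hK hE hu hw hc0 hc1 (by rw [heq]; exact hy)).1

theorem face_sum (hK : Convex ℝ K)
    (hKcone : ∀ (t : ℝ), 0 ≤ t → ∀ x ∈ K, t • x ∈ K)
    (hE : IsFaceOf K E) {u w : Y} (hu : u ∈ K) (hw : w ∈ K)
    (h : u + w ∈ E) : u ∈ E ∧ w ∈ E := by
  have := face_smul hK hKcone hE h (l := 1/2) (by norm_num)
  exact hE.2.2 u hu w hw this

/-- The canonical minimal face containing `z`. -/
theorem Fz_isFace (hK : Convex ℝ K) {z : Y} (hz : z ∈ K) :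
    IsFaceOf K {y | y ∈ K ∧ ∃ μ : ℝ, 0 < μ ∧ z + μ • (z - y) ∈ K} := by
  set Fz := {y | y ∈ K ∧ ∃ μ : ℝ, 0 < μ ∧ z + μ • (z - y) ∈ K} with hFz
  have hexact : ∀ y : Y, ∀ μ₀ : ℝ, 0 < μ₀ → z + μ₀ • (z - y) ∈ K →
      ∀ μ : ℝ, 0 < μ → μ ≤ μ₀ → z + μ • (z - y) ∈ K := by
    intro y μ₀ hμ₀ hw μ hμ hle
    have hθ1 : μ / μ₀ ≤ 1 := by rw [div_le_one hμ₀]; exact hle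
    have hθ0 : 0 ≤ μ / μ₀ := by positivity
    have := hK hz hw (by linarith : (0:ℝ) ≤ 1 - μ/μ₀) hθ0 (by ring)
    have heq : (1 - μ/μ₀) • z + (μ/μ₀) • (z + μ₀ • (z - y)) = z + μ • (z - y) := by
      match_scalars <;> field_simp <;> ring
    rwa [heq] at this
  have hhalf : ∀ x₁ ∈ K, ∀ x₂ ∈ K, (1/2 : ℝ) • (x₁ + x₂) ∈ Fz → x₁ ∈ Fz := by
    rintro x₁ h1 x₂ h2 ⟨hmK, μ, hμ, hw⟩
    refine ⟨h1, μ/(2*(1+μ)), by positivity, ?_⟩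
    have hα0 : (0:ℝ) ≤ 1/(1+μ) := by positivity
    have hα1 : 1/(1+μ) ≤ 1 := by rw [div_le_one (by linarith)]; linarith
    have hq : (1/2 : ℝ) • x₂ + (1/2 : ℝ) • z ∈ K :=
      hK h2 hz (by norm_num) (by norm_num) (by norm_num)
    have hp : (1/(1+μ)) • (z + μ • (z - (1/2 : ℝ) • (x₁ + x₂)))
        + (1 - 1/(1+μ)) • ((1/2 : ℝ) • x₂ + (1/2 : ℝ) • z) ∈ K :=
      hK hw hq hα0 (by linarith) (by ring)
    have heq : (1/(1+μ)) • (z + μ • (z - (1/2 : ℝ) • (x₁ + x₂)))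
        + (1 - 1/(1+μ)) • ((1/2 : ℝ) • x₂ + (1/2 : ℝ) • z)
        = z + (μ/(2*(1+μ))) • (z - x₁) := by
      have : (1:ℝ) + μ ≠ 0 := by positivity
      match_scalars <;> field_simp <;> try ring
    rwa [heq] at hp
  refine ⟨fun y hy => hy.1, ?_, ?_⟩
  · rintro y₁ ⟨hy₁K, μ₁, hμ₁, hw₁⟩ y₂ ⟨hy₂K, μ₂, hμ₂, hw₂⟩ a b ha hb hab
    have hμ : 0 < min μ₁ μ₂ := lt_min hμ₁ hμ₂
    have hw₁' := hexact y₁ μ₁ hμ₁ hw₁ _ hμ (min_le_left _ _)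
    have hw₂' := hexact y₂ μ₂ hμ₂ hw₂ _ hμ (min_le_right _ _)
    refine ⟨hK hy₁K hy₂K ha hb hab, min μ₁ μ₂, hμ, ?_⟩
    have := hK hw₁' hw₂' ha hb hab
    have heq : a • (z + (min μ₁ μ₂) • (z - y₁)) + b • (z + (min μ₁ μ₂) • (z - y₂))
        = z + (min μ₁ μ₂) • (z - (a • y₁ + b • y₂)) := by
      have h1 : a = 1 - b := by linarith
      subst h1; match_scalars <;> ring
    rwa [heq] at this
  · intro x₁ h1 x₂ h2 hmid
    refine ⟨hhalf x₁ h1 x₂ h2 hmid, hhalf x₂ h2 x₁ h1 ?_⟩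
    rwa [add_comm]

end Aux

theorem maxslack_ri_lemma
    {X Y : Type*}
    [NormedAddCommGroup X] [InnerProductSpace ℝ X] [FiniteDimensional ℝ X]
    [NormedAddCommGroup Y] [InnerProductSpace ℝ Y] [FiniteDimensional ℝ Y]
    (A : X →ₗ[ℝ] Y) (b : Y) (K : Set Y)
    (hKclosed : IsClosed K) (hKconv : Convex ℝ K)
    (hKcone : ∀ (t : ℝ), 0 ≤ t → ∀ x ∈ K, t • x ∈ K)
    (hP : ∃ x : X, b - A x ∈ K)
    (z : Y)
    (hz : z ∈ intrinsicInterior ℝ ({w : Y | ∃ x : X, w = A x + b} ∩ K))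
    (F : Set Y) (hF : IsSmallestFace K F z)
    (s₂ : Y)
    (hs₂ : s₂ ∈ intrinsicInterior ℝ
      ({w : Y | ∃ (x : X) (t : ℝ), w = A x + t • b} ∩ K))
    (s₃ : Y) (s₀ : ℝ)
    (hs₃ : (s₃, s₀) ∈ intrinsicInterior ℝ
      ({p : Y × ℝ | ∃ (x : X) (t : ℝ), p = (A x + t • b, t)} ∩
        (K ×ˢ {t : ℝ | 0 ≤ t}))) :
    s₂ ∈ intrinsicInterior ℝ F ∧
    (s₃ ∈ intrinsicInterior ℝ F ∧ 0 < s₀) ∧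
    (dirSet z K = dirSet s₂ K ∧ dirSet z K = dirSet s₃ K) := by
  obtain ⟨hFface, hzF, hFmin⟩ := hF
  set S₁ : Set Y := {w : Y | ∃ x : X, w = A x + b} ∩ K with hS₁def
  set S₂ : Set Y := {w : Y | ∃ (x : X) (t : ℝ), w = A x + t • b} ∩ K with hS₂def
  have hzS₁ : z ∈ S₁ := intrinsicInterior_subset hz
  obtain ⟨⟨xz, hxz⟩, hzK⟩ := hzS₁
  have hzS₁' : z ∈ S₁ := ⟨⟨xz, hxz⟩, hzK⟩
  have hFconv : Convex ℝ F := hFface.2.1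
  -- additivity of K
  have hKadd : ∀ u ∈ K, ∀ w ∈ K, u + w ∈ K := by
    intro u hu w hw
    have h1 : (1/2 : ℝ) • u + (1/2 : ℝ) • w ∈ K := hKconv hu hw (by norm_num) (by norm_num) (by norm_num)
    have := hKcone 2 (by norm_num) _ h1
    have heq : (2:ℝ) • ((1/2 : ℝ) • u + (1/2 : ℝ) • w) = u + w := by module
    rwa [heq] at this
  -- everything K-prolongable from z is in F
  have hprolF : ∀ y ∈ K, ∀ ε : ℝ, 0 < ε → z + ε • (z - y) ∈ K →
      y ∈ F ∧ z + ε • (z - y) ∈ F := by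
    intro y hy ε hε hw
    have hc0 : (0:ℝ) < 1/(1+ε) := by positivity
    have hc1 : 1/(1+ε) < 1 := by rw [div_lt_one (by linarith)]; linarith
    apply face_mem_of_combo hKconv hFface hy hw hc0 hc1
    have heq : y + (1/(1+ε)) • (z + ε • (z - y) - y) = z := by
      have : (1:ℝ) + ε ≠ 0 := by positivity
      match_scalars <;> field_simp <;> ring
    rwa [heq]
  -- S₁ ⊆ F
  have hS₁F : ∀ y ∈ S₁, y ∈ F := by
    intro y hy
    obtain ⟨ε, hε, hmem⟩ := ri_prolong hz hy
    exact (hprolF y hy.2 ε hε hmem.2).1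
  -- recession directions in R(A) ∩ K are in F
  have hRAF : ∀ x : X, A x ∈ K → A x ∈ F := by
    intro x hx
    have hsum : z + A x ∈ S₁ := by
      refine ⟨⟨xz + x, ?_⟩, hKadd z hzK _ hx⟩
      rw [hxz, map_add]; abel
    have := hS₁F _ hsum
    exact (face_sum hKconv hKcone hFface hzK hx this).2
  -- S₂ ⊆ F
  have hS₂F : ∀ w ∈ S₂, w ∈ F := by
    rintro w ⟨⟨x, t, hwe⟩, hwK⟩
    rcases lt_trichotomy t 0 with ht | ht | ht
    · have hmz : (-t) • z ∈ K := hKcone (-t) (by linarith) z hzK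
      have hr : w + (-t) • z = A (x + (-t) • xz) := by
        rw [hwe, hxz, map_add, map_smul]; module
      have hrK : A (x + (-t) • xz) ∈ K := by rw [← hr]; exact hKadd w hwK _ hmz
      have hrF : A (x + (-t) • xz) ∈ F := hRAF _ hrK
      rw [← hr] at hrF
      exact (face_sum hKconv hKcone hFface hwK hmz hrF).1
    · subst ht
      have : w = A x := by rw [hwe]; simp
      rw [this] at hwK ⊢
      exact hRAF x hwK
    · have hinvK : t⁻¹ • w ∈ K := hKcone t⁻¹ (by positivity) w hwK
      have hinvS₁ : t⁻¹ • w ∈ S₁ := by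
        refine ⟨⟨t⁻¹ • x, ?_⟩, hinvK⟩
        rw [hwe, map_smul]
        rw [smul_add, smul_smul, inv_mul_cancel₀ (ne_of_gt ht), one_smul]
      have hinvF : t⁻¹ • w ∈ F := hS₁F _ hinvS₁
      have := face_smul hKconv hKcone hFface hinvF (l := t) (le_of_lt ht)
      rwa [smul_smul, mul_inv_cancel₀ (ne_of_gt ht), one_smul] at this
  -- z ∈ ri F
  have hzriF : z ∈ intrinsicInterior ℝ F := by
    obtain ⟨u, hu⟩ := Set.Nonempty.intrinsicInterior hFconv ⟨z, hzF⟩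
    have huF : u ∈ F := intrinsicInterior_subset hu
    have hFz : F ⊆ {y | y ∈ K ∧ ∃ μ : ℝ, 0 < μ ∧ z + μ • (z - y) ∈ K} := by
      apply hFmin _ (Fz_isFace hKconv hzK)
      exact ⟨hzK, 1, one_pos, by simpa using hzK⟩
    obtain ⟨huK, μ, hμ, hw⟩ := hFz huF
    have hwF : z + μ • (z - u) ∈ F := (hprolF u huK μ hμ hw).2
    have ha0 : (0:ℝ) < μ/(1+μ) := by positivity
    have ha1 : μ/(1+μ) ≤ 1 := le_of_lt (by rw [div_lt_one (by linarith)]; linarith)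
    have := combo_mem_ri hFconv hu hwF ha0 ha1
    have heq : (μ/(1+μ)) • u + (1 - μ/(1+μ)) • (z + μ • (z - u)) = z := by
      have : (1:ℝ) + μ ≠ 0 := by positivity
      match_scalars <;> field_simp <;> ring
    rwa [heq] at this
  -- generic step: if s + ε•(s - z) ∈ F for some ε > 0 then s ∈ ri F
  have hriF_step : ∀ s : Y, ∀ ε : ℝ, 0 < ε → s + ε • (s - z) ∈ F →
      s ∈ intrinsicInterior ℝ F := by
    intro s ε hε hq
    have ha0 : (0:ℝ) < ε/(1+ε) := by positivity
    have ha1 : ε/(1+ε) ≤ 1 := le_of_lt (by rw [div_lt_one (by linarith)]; linarith)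
    have := combo_mem_ri hFconv hzriF hq ha0 ha1
    have heq : (ε/(1+ε)) • z + (1 - ε/(1+ε)) • (s + ε • (s - z)) = s := by
      have : (1:ℝ) + ε ≠ 0 := by positivity
      match_scalars <;> field_simp <;> ring
    rwa [heq] at this
  -- z ∈ S₂
  have hzS₂ : z ∈ S₂ := ⟨⟨xz, 1, by rw [hxz, one_smul]⟩, hzK⟩
  -- s₂ ∈ ri F
  have hs₂ri : s₂ ∈ intrinsicInterior ℝ F := by
    obtain ⟨ε, hε, hq⟩ := ri_prolong hs₂ hzS₂
    exact hriF_step s₂ ε hε (hS₂F _ hq)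
  -- the product system
  have hz1S₃ : ((z, (1:ℝ)) : Y × ℝ) ∈
      ({p : Y × ℝ | ∃ (x : X) (t : ℝ), p = (A x + t • b, t)} ∩ (K ×ˢ {t : ℝ | 0 ≤ t})) :=
    ⟨⟨xz, 1, by rw [hxz, one_smul]⟩, hzK, by norm_num⟩
  have hs₃S₃ := intrinsicInterior_subset hs₃
  obtain ⟨⟨x₃, t₃, he₃⟩, h₃K, h₃t⟩ := hs₃S₃
  have hs₀0 : (0:ℝ) ≤ s₀ := h₃t
  obtain ⟨ε, hε, hq3⟩ := ri_prolong hs₃ hz1S₃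
  have hq3' : (s₃ + ε • (s₃ - z), s₀ + ε * (s₀ - 1)) ∈
      ({p : Y × ℝ | ∃ (x : X) (t : ℝ), p = (A x + t • b, t)} ∩ (K ×ˢ {t : ℝ | 0 ≤ t})) := by
    convert hq3 using 2 <;> simp [Prod.smul_mk, Prod.ext_iff] <;> ring
  obtain ⟨⟨x', t', hqe⟩, hqK, hqt⟩ := hq3'
  have hs₀pos : 0 < s₀ := by
    rcases eq_or_lt_of_le hs₀0 with rfl | h
    · exfalso
      simp only [Set.mem_setOf_eq] at hqt
      nlinarith
    · exact h
  have hqS₂ : s₃ + ε • (s₃ - z) ∈ S₂ := by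
    refine ⟨⟨x', t', ?_⟩, hqK⟩
    exact congrArg Prod.fst hqe
  have hs₃ri : s₃ ∈ intrinsicInterior ℝ F := hriF_step s₃ ε hε (hS₂F _ hqS₂)
  -- dirSet comparisons
  have hdir : ∀ u ∈ F, ∀ v ∈ intrinsicInterior ℝ F, dirSet u K ⊆ dirSet v K := by
    intro u hu v hv w hw
    obtain ⟨ε', hε', hwK⟩ := hw
    obtain ⟨t, ht, hf⟩ := ri_prolong hv hu
    have hfK : v + t • (v - u) ∈ K := hFface.1 hf
    have hcomb : (1/(1+t)) • (v + t • (v - u)) + (1 - 1/(1+t)) • (u + ε' • w) ∈ K := by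
      apply hKconv hfK hwK
      · positivity
      · have : 1/(1+t) ≤ 1 := le_of_lt (by rw [div_lt_one (by linarith)]; linarith)
        linarith
      · ring
    have heq : (1/(1+t)) • (v + t • (v - u)) + (1 - 1/(1+t)) • (u + ε' • w)
        = v + (ε' * t/(1+t)) • w := by
      have : (1:ℝ) + t ≠ 0 := by positivity
      match_scalars <;> field_simp <;> ring
    rw [heq] at hcomb
    exact ⟨ε' * t/(1+t), by positivity, hcomb⟩
  have hzFmem : z ∈ F := hzF
  have hs₂F : s₂ ∈ F := intrinsicInterior_subset hs₂ri
  have hs₃F : s₃ ∈ F := intrinsicInterior_subset hs₃ri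
  refine ⟨hs₂ri, ⟨hs₃ri, hs₀pos⟩, ?_, ?_⟩
  · exact le_antisymm (hdir z hzFmem s₂ hs₂ri) (hdir s₂ hs₂F z hzriF)
  · exact le_antisymm (hdir z hzFmem s₃ hs₃ri) (hdir s₃ hs₃F z hzriF)
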